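/- For every graph H with at least one edge and for every 0 < ε < 1 there is a positive constant c = c(H, ε) such that if p ≤ c·n^{-1/d*(H)}, then the probability that G_{n,p} contains an H-tiling covering at least εn vertices tends to 0 as n → ∞. -/

import Mathlib

open MeasureTheory Filter

noncomputable def bernoulliMeasure (p : ℝ) : Measure Bool :=
  (PMF.bernoulli (min (Real.toNNReal p) 1) (min_le_right _ _)).toMeasure

noncomputable def erMeasure (n : ℕ) (p : ℝ) : Measure (Sym2 (Fin n) → Bool) :=
  Measure.pi fun _ => bernoulliMeasure p

/-- The random graph on `Fin n` determined by the edge-indicator function `ω`. -/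
def graphOfFn {n : ℕ} (ω : Sym2 (Fin n) → Bool) : SimpleGraph (Fin n) where
  Adj u v := u ≠ v ∧ ω s(u, v) = true
  symm := ⟨fun u v h => ⟨h.1.symm, by rw [Sym2.eq_swap]; exact h.2⟩⟩
  loopless := ⟨fun u h => h.1 rfl⟩

/-- `f` is a copy of `H` in `G` (not necessarily induced). -/
def IsCopyEmb {α β : Type*} (H : SimpleGraph α) (G : SimpleGraph β) (f : α ↪ β) : Prop :=
  ∀ ⦃u v : α⦄, H.Adj u v → G.Adj (f u) (f v)

/-- `F` is an `H`-tiling in `G`: vertex-disjoint copies of `H` in `G`. -/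
def IsHTiling {α β : Type*} (H : SimpleGraph α) (G : SimpleGraph β) (F : Set (α ↪ β)) : Prop :=
  (∀ f ∈ F, IsCopyEmb H G f) ∧
    ∀ f ∈ F, ∀ g ∈ F, f ≠ g → Disjoint (Set.range (⇑f)) (Set.range (⇑g))

/-- The set of vertices covered by the tiling `F`. -/
def tilingCover {α β : Type*} (F : Set (α ↪ β)) : Set β := ⋃ f ∈ F, Set.range (⇑f)

/-- `G` contains a perfect `H`-tiling. -/
def HasPerfectHTiling {α β : Type*} (H : SimpleGraph α) (G : SimpleGraph β) : Prop :=
  ∃ F : Set (α ↪ β), IsHTiling H G F ∧ tilingCover F = Set.univ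

/-- `d(H') = e(H')/(|H'| - 1)` for a subgraph `H'`. -/
noncomputable def dRatio {V : Type*} {H : SimpleGraph V} (H' : H.Subgraph) : ℝ :=
  (H'.edgeSet.ncard : ℝ) / ((H'.verts.ncard : ℝ) - 1)

/-- `d*(H) = max{d(H') : H' ⊆ H, |H'| ≥ 2}`. -/
noncomputable def dStar {V : Type*} (H : SimpleGraph V) : ℝ :=
  sSup {x : ℝ | ∃ H' : H.Subgraph, 2 ≤ H'.verts.ncard ∧ x = dRatio H'}

noncomputable def pairDensity {V : Type*} (G : SimpleGraph V) (A B : Set V) : ℝ :=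
  (({p : V × V | p.1 ∈ A ∧ p.2 ∈ B ∧ G.Adj p.1 p.2}).ncard : ℝ) /
    ((A.ncard : ℝ) * (B.ncard : ℝ))

/-- `(A, B)` is an `ε`-regular pair in `G`. -/
def IsRegularPair {V : Type*} (G : SimpleGraph V) (A B : Set V) (ε : ℝ) : Prop :=
  ∀ X ⊆ A, ∀ Y ⊆ B, ε * A.ncard ≤ (X.ncard : ℝ) → ε * B.ncard ≤ (Y.ncard : ℝ) →
    |pairDensity G A B - pairDensity G X Y| < ε

/-- `(A, B)` is an `(ε, d)`-super-regular pair in `G`. -/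
def IsSuperRegularPair {V : Type*} (G : SimpleGraph V) (A B : Set V) (ε d : ℝ) : Prop :=
  (∀ X ⊆ A, ∀ Y ⊆ B, ε * A.ncard ≤ (X.ncard : ℝ) → ε * B.ncard ≤ (Y.ncard : ℝ) →
      d < pairDensity G X Y) ∧
    (∀ a ∈ A, d * B.ncard < ((G.neighborSet a ∩ B).ncard : ℝ)) ∧
    (∀ b ∈ B, d * A.ncard < ((G.neighborSet b ∩ A).ncard : ℝ))


open scoped ENNReal

instance (p : ℝ) : IsProbabilityMeasure (bernoulliMeasure p) := by
  unfold bernoulliMeasure; infer_instance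

lemma bernoulli_true (p : ℝ) : bernoulliMeasure p {true} = min (ENNReal.ofReal p) 1 := by
  unfold bernoulliMeasure
  rw [PMF.toMeasure_apply_singleton _ _ (measurableSet_singleton _)]
  simp [PMF.bernoulli_apply, ENNReal.ofReal]

lemma erMeasure_cylinder (n : ℕ) (p : ℝ) (T : Finset (Sym2 (Fin n))) :
    erMeasure n p {ω | ∀ t ∈ T, ω t = true} = (min (ENNReal.ofReal p) 1) ^ T.card := by
  classical
  have h1 : {ω : Sym2 (Fin n) → Bool | ∀ t ∈ T, ω t = true}
      = Set.pi Set.univ (fun t => if t ∈ T then ({true} : Set Bool) else Set.univ) := by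
    ext ω
    simp only [Set.mem_setOf_eq, Set.mem_pi, Set.mem_univ, forall_true_left]
    constructor
    · intro hω t
      by_cases ht : t ∈ T <;> simp [ht]
      exact hω t ht
    · intro hω t ht
      have := hω t
      simp [ht] at this
      exact this
  rw [h1, erMeasure, Measure.pi_pi]
  have : ∀ i : Sym2 (Fin n), (bernoulliMeasure p) (if i ∈ T then ({true} : Set Bool) else Set.univ)
      = if i ∈ T then (min (ENNReal.ofReal p) 1) else 1 := by
    intro i
    by_cases hi : i ∈ T
    · simp [hi, bernoulli_true]
    · simpa [hi] using measure_univ (μ := bernoulliMeasure p)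
  simp_rw [this]
  rw [Finset.prod_ite_mem Finset.univ T]
  simp [Finset.prod_const]

section
variable {h n : ℕ} {H : SimpleGraph (Fin h)} (H' : H.Subgraph)

lemma edge_struct {e : Sym2 (Fin h)} (he : e ∈ H'.edgeSet) :
    ∃ u v : ↥H'.verts, e = s(u.1, v.1) ∧ H.Adj u.1 v.1 := by
  induction e with
  | _ u v =>
    rw [SimpleGraph.Subgraph.mem_edgeSet] at he
    exact ⟨⟨u, he.fst_mem⟩, ⟨v, he.snd_mem⟩, rfl, he.adj_sub⟩

variable [Nonempty ↥H'.verts]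

open scoped Classical in
noncomputable def extFun (ψ : ↥H'.verts → Fin n) : Fin h → Fin n :=
  fun x => if hx : x ∈ H'.verts then ψ ⟨x, hx⟩ else ψ (Classical.arbitrary _)

lemma extFun_coe (ψ : ↥H'.verts → Fin n) (a : ↥H'.verts) : extFun H' ψ a.1 = ψ a := by
  simp [extFun]

noncomputable def edFin (ψ : ↥H'.verts → Fin n) : Finset (Sym2 (Fin n)) :=
  (Set.toFinite H'.edgeSet).toFinset.image (Sym2.map (extFun H' ψ))

lemma mem_edFin {ψ : ↥H'.verts → Fin n} {x : Sym2 (Fin n)} (hx : x ∈ edFin H' ψ) :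
    ∃ a b : ↥H'.verts, x = s(ψ a, ψ b) := by
  obtain ⟨e, he, rfl⟩ := Finset.mem_image.1 hx
  rw [Set.Finite.mem_toFinset] at he
  obtain ⟨u, v, rfl, -⟩ := edge_struct H' he
  exact ⟨u, v, by rw [Sym2.map_pair_eq, extFun_coe, extFun_coe]⟩

lemma card_edFin {ψ : ↥H'.verts → Fin n} (hψ : Function.Injective ψ) :
    (edFin H' ψ).card = H'.edgeSet.ncard := by
  rw [edFin, Finset.card_image_of_injOn, Set.ncard_eq_toFinset_card _ (Set.toFinite _)]
  intro e₁ he₁ e₂ he₂ heq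
  simp only [Finset.mem_coe, Set.Finite.mem_toFinset] at he₁ he₂
  obtain ⟨u₁, v₁, rfl, -⟩ := edge_struct H' he₁
  obtain ⟨u₂, v₂, rfl, -⟩ := edge_struct H' he₂
  rw [Sym2.map_pair_eq, Sym2.map_pair_eq, extFun_coe, extFun_coe, extFun_coe, extFun_coe]
    at heq
  rw [Sym2.eq_iff] at heq ⊢
  rcases heq with ⟨h1, h2⟩ | ⟨h1, h2⟩
  · exact Or.inl ⟨congrArg Subtype.val (hψ h1), congrArg Subtype.val (hψ h2)⟩
  · exact Or.inr ⟨congrArg Subtype.val (hψ h1), congrArg Subtype.val (hψ h2)⟩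

lemma edFin_disjoint {ψ φ : ↥H'.verts → Fin n}
    (hd : Disjoint (Set.range ψ) (Set.range φ)) : Disjoint (edFin H' ψ) (edFin H' φ) := by
  rw [Finset.disjoint_left]
  intro x hxψ hxφ
  obtain ⟨a, b, rfl⟩ := mem_edFin H' hxψ
  obtain ⟨c, d, hcd⟩ := mem_edFin H' hxφ
  rw [Sym2.eq_iff] at hcd
  have : ψ a ∈ Set.range φ := by
    rcases hcd with ⟨h1, -⟩ | ⟨h1, -⟩
    · exact h1 ▸ Set.mem_range_self c
    · exact h1 ▸ Set.mem_range_self d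
  exact Set.disjoint_left.1 hd (Set.mem_range_self a) this

lemma measure_bound (p : ℝ) (ε : ℝ) (m : ℕ)
    (hmF : ∀ k : ℕ, ε * n ≤ (h : ℝ) * k → m ≤ k) :
    erMeasure n p {ω | ∃ F : Set (Fin h ↪ Fin n), IsHTiling H (graphOfFn ω) F ∧
        ε * n ≤ ((tilingCover F).ncard : ℝ)} ≤
      ((n ^ H'.verts.ncard).choose m : ℝ≥0∞) *
        (min (ENNReal.ofReal p) 1) ^ (m * H'.edgeSet.ncard) := by
  classical
  set q := min (ENNReal.ofReal p) 1 with hq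
  set 𝒮 : Finset (Finset (↥H'.verts → Fin n)) :=
    (Finset.univ.powersetCard m).filter
      (fun S => (∀ ψ ∈ S, Function.Injective ψ) ∧
        ∀ ψ ∈ S, ∀ φ ∈ S, ψ ≠ φ → Disjoint (Set.range ψ) (Set.range φ)) with h𝒮
  have hsub : {ω : Sym2 (Fin n) → Bool | ∃ F : Set (Fin h ↪ Fin n),
      IsHTiling H (graphOfFn ω) F ∧ ε * n ≤ ((tilingCover F).ncard : ℝ)} ⊆
      ⋃ S ∈ 𝒮, {ω | ∀ t ∈ S.biUnion (edFin H'), ω t = true} := by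
    rintro ω ⟨F, ⟨hcopies, hdisj⟩, hcov⟩
    have hFfin : F.Finite := Set.toFinite F
    set Ffin := hFfin.toFinset with hFfin'
    -- cover size bound
    have hcsub : tilingCover F ⊆ ↑(Ffin.biUnion (fun f => Finset.image f Finset.univ)) := by
      rintro x hx
      simp only [tilingCover, Set.mem_iUnion, Set.mem_range] at hx
      obtain ⟨f, hf, y, rfl⟩ := hx
      simp only [Finset.coe_biUnion, Set.mem_iUnion, Finset.coe_image, Set.mem_image,
        Finset.mem_coe, Set.Finite.mem_toFinset]
      exact ⟨f, hFfin.mem_toFinset.2 hf, y, by simp⟩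
    have hcard : (tilingCover F).ncard ≤ h * Ffin.card := by
      calc (tilingCover F).ncard ≤ (↑(Ffin.biUnion (fun f => Finset.image f Finset.univ)) :
            Set (Fin n)).ncard := Set.ncard_le_ncard hcsub (Set.toFinite _)
        _ = (Ffin.biUnion (fun f => Finset.image f Finset.univ)).card :=
            Set.ncard_coe_finset _
        _ ≤ ∑ f ∈ Ffin, (Finset.image f Finset.univ).card := Finset.card_biUnion_le
        _ ≤ ∑ _f ∈ Ffin, h := by
            refine Finset.sum_le_sum fun f _ => ?_
            calc (Finset.image f Finset.univ).card ≤ Finset.univ.card :=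
                  Finset.card_image_le
              _ = h := by simp
        _ = Ffin.card * h := by rw [Finset.sum_const, smul_eq_mul]
        _ = h * Ffin.card := mul_comm _ _
    have hm : m ≤ Ffin.card := by
      refine hmF _ ?_
      calc ε * n ≤ ((tilingCover F).ncard : ℝ) := hcov
        _ ≤ ((h * Ffin.card : ℕ) : ℝ) := by exact_mod_cast hcard
        _ = (h : ℝ) * Ffin.card := by push_cast; ring
    obtain ⟨S₀, hS₀sub, hS₀card⟩ := Finset.exists_subset_card_eq hm
    have hS₀F : ∀ f ∈ S₀, f ∈ F := fun f hf => hFfin.mem_toFinset.1 (hS₀sub hf)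
    set ρ : (Fin h ↪ Fin n) → (↥H'.verts → Fin n) := fun f a => f a.1 with hρ
    have hρinj : Set.InjOn ρ S₀ := by
      intro f hf g hg hfg
      by_contra hne
      have hd := hdisj f (hS₀F f hf) g (hS₀F g hg) hne
      have : ρ f (Classical.arbitrary _) ∈ Set.range ⇑g := by
        rw [hfg]; exact ⟨(Classical.arbitrary _ : ↥H'.verts).1, rfl⟩
      exact Set.disjoint_left.1 hd ⟨(Classical.arbitrary _ : ↥H'.verts).1, rfl⟩ this
    set S := S₀.image ρ with hS
    have hSmem : S ∈ 𝒮 := by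
      rw [h𝒮, Finset.mem_filter, Finset.mem_powersetCard_univ]
      refine ⟨by rw [hS, Finset.card_image_of_injOn hρinj, hS₀card], ?_, ?_⟩
      · rintro ψ hψ
        obtain ⟨f, _, rfl⟩ := Finset.mem_image.1 hψ
        exact fun a b hab => Subtype.ext (f.injective hab)
      · rintro ψ hψ φ hφ hne
        obtain ⟨f, hf, rfl⟩ := Finset.mem_image.1 hψ
        obtain ⟨g, hg, rfl⟩ := Finset.mem_image.1 hφ
        have hfg : f ≠ g := fun hh => hne (by rw [hh])
        have hd := hdisj f (hS₀F f hf) g (hS₀F g hg) hfg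
        refine Set.disjoint_of_subset ?_ ?_ hd
        · rintro x ⟨a, rfl⟩; exact ⟨a.1, rfl⟩
        · rintro x ⟨a, rfl⟩; exact ⟨a.1, rfl⟩
    refine Set.mem_iUnion₂.2 ⟨S, hSmem, ?_⟩
    intro t ht
    obtain ⟨ψ, hψ, htψ⟩ := Finset.mem_biUnion.1 ht
    obtain ⟨f, hf, rfl⟩ := Finset.mem_image.1 hψ
    obtain ⟨e, he, rfl⟩ := Finset.mem_image.1 htψ
    rw [Set.Finite.mem_toFinset] at he
    obtain ⟨u, v, rfl, hadj⟩ := edge_struct H' he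
    rw [Sym2.map_pair_eq, extFun_coe, extFun_coe]
    have := hcopies f (hS₀F f hf) hadj
    exact this.2
  calc erMeasure n p _ ≤ erMeasure n p (⋃ S ∈ 𝒮, {ω | ∀ t ∈ S.biUnion (edFin H'), ω t = true}) :=
        measure_mono hsub
    _ ≤ ∑ S ∈ 𝒮, erMeasure n p {ω | ∀ t ∈ S.biUnion (edFin H'), ω t = true} :=
        measure_biUnion_finset_le _ _
    _ = ∑ S ∈ 𝒮, q ^ (S.biUnion (edFin H')).card := by
        refine Finset.sum_congr rfl fun S _ => ?_
        rw [erMeasure_cylinder]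
    _ ≤ ∑ _S ∈ 𝒮, q ^ (m * H'.edgeSet.ncard) := by
        refine Finset.sum_le_sum fun S hS => ?_
        rw [h𝒮, Finset.mem_filter, Finset.mem_powersetCard_univ] at hS
        obtain ⟨hcardS, hinj, hdisjS⟩ := hS
        rw [Finset.card_biUnion (fun ψ hψ φ hφ hne => edFin_disjoint H' (hdisjS ψ hψ φ hφ hne))]
        rw [Finset.sum_congr rfl fun ψ hψ => card_edFin H' (hinj ψ hψ)]
        rw [Finset.sum_const, hcardS, smul_eq_mul]
    _ = (𝒮.card : ℝ≥0∞) * q ^ (m * H'.edgeSet.ncard) := by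
        rw [Finset.sum_const, nsmul_eq_mul]
    _ ≤ ((n ^ H'.verts.ncard).choose m : ℝ≥0∞) * q ^ (m * H'.edgeSet.ncard) := by
        refine mul_le_mul_left ?_ _
        have hcard𝒮 : 𝒮.card ≤ (n ^ H'.verts.ncard).choose m := by
          calc 𝒮.card ≤ ((Finset.univ : Finset (↥H'.verts → Fin n)).powersetCard m).card :=
              Finset.card_le_card (Finset.filter_subset _ _)
            _ = (Fintype.card (↥H'.verts → Fin n)).choose m := by
                rw [Finset.card_powersetCard, Finset.card_univ]
            _ = (n ^ H'.verts.ncard).choose m := by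
                rw [Fintype.card_fun, Fintype.card_fin]
                congr 2
                rw [Set.ncard_eq_toFinset_card', Set.toFinset_card]
        exact_mod_cast hcard𝒮


section
variable {h : ℕ} {H : SimpleGraph (Fin h)}

lemma dset_subset :
    {x : ℝ | ∃ H' : H.Subgraph, 2 ≤ H'.verts.ncard ∧ x = dRatio H'} ⊆
      (fun pr : ℕ × ℕ => (pr.1 : ℝ) / ((pr.2 : ℝ) - 1)) ''
        (Set.Iic (Fintype.card (Sym2 (Fin h))) ×ˢ Set.Iic h) := by
  rintro x ⟨H', _, rfl⟩
  refine ⟨(H'.edgeSet.ncard, H'.verts.ncard), ⟨?_, ?_⟩, rfl⟩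
  · have := Set.ncard_le_ncard (Set.subset_univ H'.edgeSet) Set.finite_univ
    simpa [Set.ncard_univ] using this
  · have := Set.ncard_le_ncard (Set.subset_univ H'.verts) Set.finite_univ
    simpa [Set.ncard_univ] using this

lemma dset_finite :
    {x : ℝ | ∃ H' : H.Subgraph, 2 ≤ H'.verts.ncard ∧ x = dRatio H'}.Finite :=
  Set.Finite.subset (Set.Finite.image _ (Set.Finite.prod (Set.finite_Iic _) (Set.finite_Iic _)))
    dset_subset

lemma one_mem_dset (hH : H.edgeSet.Nonempty) :
    (1 : ℝ) ∈ {x : ℝ | ∃ H' : H.Subgraph, 2 ≤ H'.verts.ncard ∧ x = dRatio H'} := by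
  obtain ⟨e, he⟩ := hH
  induction e with
  | _ u v =>
    rw [SimpleGraph.mem_edgeSet] at he
    refine ⟨H.subgraphOfAdj he, ?_, ?_⟩
    · rw [SimpleGraph.subgraphOfAdj_verts, Set.ncard_pair he.ne]
    · rw [dRatio, SimpleGraph.subgraphOfAdj_verts, Set.ncard_pair he.ne,
        SimpleGraph.edgeSet_subgraphOfAdj, Set.ncard_singleton]
      norm_num

lemma one_le_dStar (hH : H.edgeSet.Nonempty) : 1 ≤ dStar H :=
  le_csSup dset_finite.bddAbove (one_mem_dset hH)

lemma dRatio_le_dStar (H' : H.Subgraph) (h2 : 2 ≤ H'.verts.ncard) : dRatio H' ≤ dStar H :=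
  le_csSup dset_finite.bddAbove ⟨H', h2, rfl⟩

lemma dStar_mem (hH : H.edgeSet.Nonempty) :
    ∃ H' : H.Subgraph, 2 ≤ H'.verts.ncard ∧ dStar H = dRatio H' :=
  Set.Nonempty.csSup_mem ⟨1, one_mem_dset hH⟩ dset_finite

end



lemma pow_le_exp_mul_factorial (M : ℕ) : ((M : ℝ)) ^ M ≤ Real.exp 1 ^ M * M.factorial := by
  have h1 : ((M : ℝ)) ^ M / M.factorial ≤ Real.exp M := by
    refine le_trans ?_ (Real.sum_le_exp_of_nonneg (Nat.cast_nonneg M) (M + 1))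
    refine Finset.single_le_sum (f := fun i => (M : ℝ) ^ i / i.factorial) ?_
      (Finset.self_mem_range_succ M)
    intro i _
    positivity
  rw [div_le_iff₀ (by positivity)] at h1
  calc ((M : ℝ)) ^ M ≤ Real.exp M * M.factorial := h1
    _ = Real.exp 1 ^ M * M.factorial := by rw [← Real.exp_one_pow]

/-- Theorem 5, part of Theorem 4.9 in [JŁR]: for every `H` with at least
one edge and every `0 < ε < 1` there is `c = c(H, ε) > 0` such that if `p ≤ c n^{-1/d*(H)}`
then the probability that `G_{n,p}` contains an `H`-tiling covering at least `εn` vertices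
tends to `0`. -/
theorem statement5 (h : ℕ) (H : SimpleGraph (Fin h)) (hH : H.edgeSet.Nonempty)
    (ε : ℝ) (hε0 : 0 < ε) (hε1 : ε < 1) :
    ∃ c : ℝ, 0 < c ∧
      ∀ p : ℕ → ℝ, (∀ n : ℕ, p n ≤ c * (n : ℝ) ^ (-(1 / dStar H))) →
        Tendsto
          (fun n : ℕ =>
            erMeasure n (p n)
              {ω | ∃ F : Set (Fin h ↪ Fin n),
                IsHTiling H (graphOfFn ω) F ∧ ε * n ≤ ((tilingCover F).ncard : ℝ)})
          atTop (nhds 0) := by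
  classical
  obtain ⟨H', h2, hds⟩ := dStar_mem hH
  haveI : Nonempty ↥H'.verts := by
    have hne : H'.verts.Nonempty := by
      rw [← Set.ncard_pos (Set.toFinite _)]
      omega
    exact hne.to_subtype
  have hd1 : 1 ≤ dStar H := one_le_dStar hH
  have hd0 : (0 : ℝ) < dStar H := lt_of_lt_of_le one_pos hd1
  have hh'2R : (2 : ℝ) ≤ (H'.verts.ncard : ℝ) := by exact_mod_cast h2
  have hh'1R : (1 : ℝ) ≤ (H'.verts.ncard : ℝ) - 1 := by linarith
  have hvsub : H'.verts.ncard ≤ h := by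
    have := Set.ncard_le_ncard (Set.subset_univ H'.verts) Set.finite_univ
    simpa [Set.ncard_univ] using this
  have hhpos : 0 < h := by omega
  have hhR : (0 : ℝ) < h := by exact_mod_cast hhpos
  have heq : (H'.edgeSet.ncard : ℝ) = dStar H * ((H'.verts.ncard : ℝ) - 1) := by
    rw [hds, dRatio]
    field_simp
  have he'1 : 1 ≤ H'.edgeSet.ncard := by
    have h1 : (1 : ℝ) ≤ (H'.edgeSet.ncard : ℝ) := by nlinarith
    exact_mod_cast h1
  set c := min 1 (ε / (9 * h)) with hc
  have hc0 : 0 < c := lt_min one_pos (by positivity)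
  have hc1 : c ≤ 1 := min_le_left _ _
  have hcε : c ≤ ε / (9 * h) := min_le_right _ _
  refine ⟨c, hc0, ?_⟩
  intro p hp
  set m : ℕ → ℕ := fun n => ⌈ε * n / h⌉₊ with hm
  set x : ℕ → ℝ := fun n => (n : ℝ) ^ (-(1 / dStar H)) with hx
  have hx0 : ∀ n, 0 ≤ x n := fun n => Real.rpow_nonneg (Nat.cast_nonneg n) _
  set r : ℕ → ℝ := fun n =>
    (((n ^ H'.verts.ncard).choose (m n) : ℕ) : ℝ) * (c * x n) ^ (m n * H'.edgeSet.ncard)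
    with hr
  have hr0 : ∀ n, 0 ≤ r n := by
    intro n
    have := hx0 n
    positivity
  have hbound : ∀ n : ℕ,
      erMeasure n (p n) {ω | ∃ F : Set (Fin h ↪ Fin n),
        IsHTiling H (graphOfFn ω) F ∧ ε * n ≤ ((tilingCover F).ncard : ℝ)} ≤
      ENNReal.ofReal (r n) := by
    intro n
    refine le_trans (measure_bound H' (p n) ε (m n) ?_) ?_
    · intro k hk
      rw [hm]
      refine Nat.ceil_le.2 ?_
      rw [div_le_iff₀ hhR]
      calc ε * n ≤ (h : ℝ) * k := hk
        _ = (k : ℝ) * h := mul_comm _ _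
    · calc ((n ^ H'.verts.ncard).choose (m n) : ℝ≥0∞) *
            (min (ENNReal.ofReal (p n)) 1) ^ (m n * H'.edgeSet.ncard)
          ≤ ((n ^ H'.verts.ncard).choose (m n) : ℝ≥0∞) *
            (ENNReal.ofReal (c * x n)) ^ (m n * H'.edgeSet.ncard) := by
            refine mul_le_mul_right (pow_le_pow_left' ?_ _) _
            exact le_trans (min_le_left _ _) (ENNReal.ofReal_le_ofReal (hp n))
        _ = ENNReal.ofReal (r n) := by
            rw [← ENNReal.ofReal_pow (by positivity), ← ENNReal.ofReal_natCast
              ((n ^ H'.verts.ncard).choose (m n)), ← ENNReal.ofReal_mul (Nat.cast_nonneg _)]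
  have hmtend : Tendsto m atTop atTop := by
    have h1 : Tendsto (fun n : ℕ => ε * n / h) atTop atTop := by
      apply Tendsto.atTop_div_const hhR
      exact Tendsto.const_mul_atTop hε0 tendsto_natCast_atTop_atTop
    exact tendsto_nat_ceil_atTop.comp h1
  have hhalf : Tendsto (fun n => (1 / 2 : ℝ) ^ m n) atTop (nhds 0) :=
    (tendsto_pow_atTop_nhds_zero_of_lt_one (by norm_num) (by norm_num)).comp hmtend
  have hrle : ∀ᶠ n in atTop, r n ≤ (1 / 2 : ℝ) ^ m n := by
    filter_upwards [eventually_ge_atTop 1] with n hn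
    have hnR : (1 : ℝ) ≤ (n : ℝ) := by exact_mod_cast hn
    have hn0 : (0 : ℝ) < n := lt_of_lt_of_le one_pos hnR
    set M := m n with hM
    set E := H'.edgeSet.ncard with hE
    set V := H'.verts.ncard with hV
    have hM1 : 1 ≤ M := by
      rw [hM, hm]
      exact Nat.ceil_pos.2 (by positivity)
    have hMR : (0 : ℝ) < M := by exact_mod_cast hM1
    have hceil : ε * n / h ≤ (M : ℝ) := Nat.le_ceil _
    rw [div_le_iff₀ hhR] at hceil
    have hnM : (n : ℝ) / M ≤ h / ε := by
      rw [div_le_div_iff₀ hMR hε0]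
      nlinarith
    have hK : M ≤ M * E := Nat.le_mul_of_pos_right _ (by omega)
    have hMpow : (0 : ℝ) < (M : ℝ) ^ M := pow_pos hMR M
    have hA : (((n ^ V).choose M : ℕ) : ℝ) ≤ (n : ℝ) ^ (V * M) / M.factorial := by
      calc (((n ^ V).choose M : ℕ) : ℝ) ≤ ((n ^ V : ℕ) : ℝ) ^ M / M.factorial :=
          Nat.choose_le_pow_div M (n ^ V)
        _ = (n : ℝ) ^ (V * M) / M.factorial := by rw [pow_mul]; push_cast; ring
    have hxK : x n ^ (M * E) = (n : ℝ) ^ (-((M : ℝ) * ((V : ℝ) - 1))) := by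
      rw [hx, ← Real.rpow_natCast ((n : ℝ) ^ (-(1 / dStar H))) (M * E),
        ← Real.rpow_mul hn0.le]
      congr 1
      have hKR : ((M * E : ℕ) : ℝ) = (M : ℝ) * (dStar H * ((V : ℝ) - 1)) := by
        rw [Nat.cast_mul, heq]
      rw [hKR]
      field_simp
    have hcomb : (n : ℝ) ^ (V * M) * x n ^ (M * E) = (n : ℝ) ^ M := by
      rw [hxK, ← Real.rpow_natCast (n : ℝ) (V * M), ← Real.rpow_add hn0,
        ← Real.rpow_natCast (n : ℝ) M]
      congr 1
      push_cast
      ring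
    have hfac : (1 : ℝ) / M.factorial ≤ Real.exp 1 ^ M / (M : ℝ) ^ M := by
      rw [div_le_div_iff₀ (by positivity) hMpow]
      calc (1 : ℝ) * (M : ℝ) ^ M = (M : ℝ) ^ M := one_mul _
        _ ≤ Real.exp 1 ^ M * M.factorial := pow_le_exp_mul_factorial M
    have hexp : Real.exp 1 ≤ 3 := by
      have := Real.exp_one_lt_d9
      linarith
    calc r n = (((n ^ V).choose M : ℕ) : ℝ) * (c * x n) ^ (M * E) := by simp only [hr, hM]
      _ = (((n ^ V).choose M : ℕ) : ℝ) * (c ^ (M * E) * x n ^ (M * E)) := by rw [mul_pow]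
      _ ≤ ((n : ℝ) ^ (V * M) / M.factorial) * (c ^ (M * E) * x n ^ (M * E)) := by
          refine mul_le_mul_of_nonneg_right hA ?_
          have := hx0 n
          positivity
      _ = ((n : ℝ) ^ (V * M) * x n ^ (M * E)) * c ^ (M * E) * (1 / M.factorial) := by
          ring
      _ = (n : ℝ) ^ M * c ^ (M * E) * (1 / M.factorial) := by rw [hcomb]
      _ ≤ (n : ℝ) ^ M * c ^ M * (1 / M.factorial) := by
          have hcle : c ^ (M * E) ≤ c ^ M := pow_le_pow_of_le_one hc0.le hc1 hK
          have h1 : (0 : ℝ) ≤ 1 / M.factorial := by positivity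
          exact mul_le_mul_of_nonneg_right
            (mul_le_mul_of_nonneg_left hcle (pow_nonneg hn0.le M)) h1
      _ ≤ (n : ℝ) ^ M * c ^ M * (Real.exp 1 ^ M / (M : ℝ) ^ M) := by
          refine mul_le_mul_of_nonneg_left hfac ?_
          positivity
      _ = ((n : ℝ) / M * (c * Real.exp 1)) ^ M := by
          rw [mul_pow, div_pow, mul_pow]
          field_simp
      _ ≤ (1 / 2 : ℝ) ^ M := by
          refine pow_le_pow_left₀ ?_ ?_ M
          · have := Real.exp_pos 1
            positivity
          · have hstep : (n : ℝ) / M * (c * Real.exp 1) ≤ h / ε * (ε / (9 * h) * 3) := by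
              refine mul_le_mul hnM ?_ ?_ (by positivity)
              · refine mul_le_mul hcε hexp (Real.exp_pos 1).le (by positivity)
              · have := (Real.exp_pos 1).le
                positivity
            have heval : (h : ℝ) / ε * (ε / (9 * h) * 3) = 1 / 3 := by
              field_simp
              ring
            rw [heval] at hstep
            linarith
  have hrtend : Tendsto r atTop (nhds 0) :=
    squeeze_zero' (Eventually.of_forall hr0) hrle hhalf
  have hofReal : Tendsto (fun n => ENNReal.ofReal (r n)) atTop (nhds 0) := by
    rw [← ENNReal.ofReal_zero]
    exact (ENNReal.continuous_ofReal.tendsto 0).comp hrtend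
  exact tendsto_of_tendsto_of_tendsto_of_le_of_le tendsto_const_nhds hofReal
    (fun n => zero_le') hbound
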